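/- Let Y = Xθ* + ε with support S* of size K, let λ > 0, and suppose κ(S*,3) ≥ κ* > 0 and ‖(1/T)Xᵀε‖_∞ ≤ λ/2. Let θ̂ be any Lasso minimizer with parameter λ. Let Z ⊆ {0,1}^m be a nonempty finite set (of indicator vectors of feasible coalition structures), let z* ∈ Z maximize z ↦ zᵀθ* over Z, and let ẑ ∈ Z maximize z ↦ zᵀθ̂ over Z. Then the welfare gap satisfies (z*)ᵀθ* − ẑᵀθ* ≤ 2‖θ̂ − θ*‖₁ ≤ 48 λ K / κ*². -/

import Mathlib

open Finset

set_option maxHeartbeats 1000000 in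
theorem stmt16
    (T m K : ℕ) (hT : 0 < T)
    (X : Matrix (Fin T) (Fin m) ℝ)
    (θstar : Fin m → ℝ) (ε Y : Fin T → ℝ)
    (hY : ∀ t, Y t = (∑ j, X t j * θstar j) + ε t)
    (Sstar : Finset (Fin m)) (hSstar : ∀ j, j ∈ Sstar ↔ θstar j ≠ 0)
    (hcard : Sstar.card = K)
    (lam : ℝ) (hlam : 0 < lam)
    (κstar : ℝ) (hκ : 0 < κstar)
    -- restricted eigenvalue condition `κ(S*, 3) ≥ κ*`
    (hRE : ∀ u : Fin m → ℝ,
      (∑ j ∈ Sstarᶜ, |u j|) ≤ 3 * ∑ j ∈ Sstar, |u j| →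
      κstar * Real.sqrt (T : ℝ) * Real.sqrt (∑ j ∈ Sstar, u j ^ 2)
        ≤ Real.sqrt (∑ t, (∑ j, X t j * u j) ^ 2))
    -- noise condition `‖(1/T) Xᵀε‖_∞ ≤ λ/2`
    (hnoise : ∀ j, |(1 / (T : ℝ)) * ∑ t, X t j * ε t| ≤ lam / 2)
    (θhat : Fin m → ℝ)
    -- `θhat` is a minimizer of the Lasso objective
    (hmin : ∀ θ : Fin m → ℝ,
      (1 / (2 * (T : ℝ))) * (∑ t, (Y t - ∑ j, X t j * θhat j) ^ 2)
          + lam * ∑ j, |θhat j|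
        ≤ (1 / (2 * (T : ℝ))) * (∑ t, (Y t - ∑ j, X t j * θ j) ^ 2)
          + lam * ∑ j, |θ j|)
    -- `Z ⊆ {0,1}^m` is a nonempty finite set of indicator vectors
    (Z : Set (Fin m → ℝ)) (hZfin : Z.Finite) (hZne : Z.Nonempty)
    (hZ01 : ∀ z ∈ Z, ∀ j, z j = 0 ∨ z j = 1)
    -- `zstar` maximizes `zᵀθ*` over `Z`
    (zstar : Fin m → ℝ) (hzstarZ : zstar ∈ Z)
    (hzstar : ∀ z ∈ Z, (∑ j, z j * θstar j) ≤ ∑ j, zstar j * θstar j)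
    -- `zhat` maximizes `zᵀθ̂` over `Z`
    (zhat : Fin m → ℝ) (hzhatZ : zhat ∈ Z)
    (hzhat : ∀ z ∈ Z, (∑ j, z j * θhat j) ≤ ∑ j, zhat j * θhat j) :
    (∑ j, zstar j * θstar j) - (∑ j, zhat j * θstar j)
        ≤ 2 * ∑ j, |θhat j - θstar j| ∧
    2 * (∑ j, |θhat j - θstar j|) ≤ 48 * lam * K / κstar ^ 2 := by
  classical
  set u : Fin m → ℝ := fun j => θhat j - θstar j with hu
  set A : ℝ := ∑ j ∈ Sstar, |u j| with hA
  set B : ℝ := ∑ j ∈ Sstarᶜ, |u j| with hB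
  have hT' : (0:ℝ) < T := by exact_mod_cast hT
  have hAB : (∑ j, |u j|) = A + B := by
    rw [hA, hB]
    rw [← Finset.sum_add_sum_compl Sstar]
  have hAnn : 0 ≤ A := Finset.sum_nonneg fun j _ => abs_nonneg _
  have hBnn : 0 ≤ B := Finset.sum_nonneg fun j _ => abs_nonneg _
  -- Part 1 : welfare gap
  have hzbound : ∀ z ∈ Z, |∑ j, z j * u j| ≤ ∑ j, |u j| := by
    intro z hz
    calc |∑ j, z j * u j| ≤ ∑ j, |z j * u j| := Finset.abs_sum_le_sum_abs _ _
      _ ≤ ∑ j, |u j| := by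
          apply Finset.sum_le_sum
          intro j _
          rw [abs_mul]
          rcases hZ01 z hz j with h0 | h1
          · simp [h0, abs_nonneg]
          · simp [h1]
  have hsplit : ∀ z : Fin m → ℝ, (∑ j, z j * θhat j) - (∑ j, z j * θstar j)
      = ∑ j, z j * u j := by
    intro z
    rw [← Finset.sum_sub_distrib]
    congr 1; funext j; rw [hu]; ring
  have part1 : (∑ j, zstar j * θstar j) - (∑ j, zhat j * θstar j)
      ≤ 2 * ∑ j, |θhat j - θstar j| := by
    have h1 := hzbound zstar hzstarZ
    have h2 := hzbound zhat hzhatZ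
    have h3 := hzhat zstar hzstarZ
    have e1 := hsplit zstar
    have e2 := hsplit zhat
    have a1 := abs_le.mp h1
    have a2 := abs_le.mp h2
    have : (∑ j, |θhat j - θstar j|) = ∑ j, |u j| := rfl
    rw [this]
    linarith [a1.1, a1.2, a2.1, a2.2]
  -- Part 2 : Lasso ℓ¹ error bound
  -- residual rewriting
  have hres : ∀ t, Y t - ∑ j, X t j * θhat j = ε t - ∑ j, X t j * u j := by
    intro t
    rw [hY t]
    have : (∑ j, X t j * u j) = (∑ j, X t j * θhat j) - ∑ j, X t j * θstar j := by
      rw [← Finset.sum_sub_distrib]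
      congr 1; funext j; rw [hu]; ring
    rw [this]; ring
  have hres0 : ∀ t, Y t - ∑ j, X t j * θstar j = ε t := by
    intro t; rw [hY t]; ring
  set v : Fin T → ℝ := fun t => ∑ j, X t j * u j with hv
  have key := hmin θstar
  rw [show (∑ t, (Y t - ∑ j, X t j * θhat j) ^ 2) = ∑ t, (ε t - v t)^2 from by
        apply Finset.sum_congr rfl; intro t _; rw [hres t]] at key
  rw [show (∑ t, (Y t - ∑ j, X t j * θstar j) ^ 2) = ∑ t, (ε t)^2 from by
        apply Finset.sum_congr rfl; intro t _; rw [hres0 t]] at key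
  have hexp : (∑ t, (ε t - v t)^2) = (∑ t, (ε t)^2) - 2 * (∑ t, ε t * v t) + ∑ t, v t ^ 2 := by
    rw [Finset.mul_sum, ← Finset.sum_sub_distrib, ← Finset.sum_add_distrib]
    apply Finset.sum_congr rfl; intro t _; ring
  rw [hexp] at key
  -- key : (1/(2T)) * (∑ε² − 2∑εv + ∑v²) + λ‖θ̂‖₁ ≤ (1/(2T))∑ε² + λ‖θ*‖₁
  have basic : (1 / (2 * (T:ℝ))) * (∑ t, v t ^ 2)
      ≤ (1/(T:ℝ)) * (∑ t, ε t * v t) + lam * ((∑ j, |θstar j|) - ∑ j, |θhat j|) := by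
    have hx : (1 / (2 * (T:ℝ))) * ((∑ t, (ε t)^2) - 2 * (∑ t, ε t * v t) + ∑ t, v t ^ 2)
        = (1 / (2 * (T:ℝ))) * (∑ t, (ε t)^2) - (1/(T:ℝ)) * (∑ t, ε t * v t)
          + (1 / (2 * (T:ℝ))) * (∑ t, v t ^ 2) := by
      field_simp
    rw [hx] at key
    linarith [key]
  -- cross term bound
  have hcross : (1/(T:ℝ)) * (∑ t, ε t * v t) ≤ (lam/2) * ∑ j, |u j| := by
    have hswap : (∑ t, ε t * v t) = ∑ j, (∑ t, X t j * ε t) * u j := by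
      simp only [hv, Finset.mul_sum, Finset.sum_mul]
      rw [Finset.sum_comm]
      apply Finset.sum_congr rfl; intro j _
      apply Finset.sum_congr rfl; intro t _; ring
    rw [hswap, Finset.mul_sum, Finset.mul_sum]
    apply Finset.sum_le_sum
    intro j _
    calc (1/(T:ℝ)) * ((∑ t, X t j * ε t) * u j)
        ≤ |(1/(T:ℝ)) * ((∑ t, X t j * ε t) * u j)| := le_abs_self _
      _ = |(1/(T:ℝ)) * (∑ t, X t j * ε t)| * |u j| := by rw [← abs_mul]; ring_nf
      _ ≤ (lam/2) * |u j| := by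
          apply mul_le_mul_of_nonneg_right (hnoise j) (abs_nonneg _)
  -- ℓ¹ term bound
  have hl1 : (∑ j, |θstar j|) - (∑ j, |θhat j|) ≤ A - B := by
    rw [← Finset.sum_add_sum_compl Sstar (fun j => |θstar j|),
        ← Finset.sum_add_sum_compl Sstar (fun j => |θhat j|)]
    have hSc : ∀ j ∈ Sstarᶜ, θstar j = 0 := by
      intro j hj
      by_contra h
      exact (Finset.mem_compl.mp hj) ((hSstar j).mpr h)
    have e1 : (∑ j ∈ Sstarᶜ, |θstar j|) = 0 := by
      apply Finset.sum_eq_zero; intro j hj; rw [hSc j hj]; simp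
    have e2 : (∑ j ∈ Sstarᶜ, |θhat j|) = B := by
      rw [hB]; apply Finset.sum_congr rfl; intro j hj
      rw [hu]; simp [hSc j hj]
    have e3 : (∑ j ∈ Sstar, |θstar j|) - (∑ j ∈ Sstar, |θhat j|) ≤ A := by
      rw [hA, ← Finset.sum_sub_distrib]
      apply Finset.sum_le_sum
      intro j _
      have := abs_sub_abs_le_abs_sub (θstar j) (θhat j)
      rw [hu]
      calc |θstar j| - |θhat j| ≤ |θstar j - θhat j| := this
        _ = |θhat j - θstar j| := abs_sub_comm _ _
    linarith [e1, e2, e3]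
  -- combine
  have hmain : (1 / (2 * (T:ℝ))) * (∑ t, v t ^ 2) ≤ (3*lam/2) * A - (lam/2) * B := by
    have := hcross
    rw [hAB] at this
    calc (1 / (2 * (T:ℝ))) * (∑ t, v t ^ 2)
        ≤ (1/(T:ℝ)) * (∑ t, ε t * v t) + lam * ((∑ j, |θstar j|) - ∑ j, |θhat j|) := basic
      _ ≤ (lam/2) * (A + B) + lam * (A - B) := by
          have := mul_le_mul_of_nonneg_left hl1 (le_of_lt hlam)
          linarith
      _ = (3*lam/2) * A - (lam/2) * B := by ring
  have hvnn : (0:ℝ) ≤ (1 / (2 * (T:ℝ))) * (∑ t, v t ^ 2) := by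
    apply mul_nonneg (by positivity)
    exact Finset.sum_nonneg fun t _ => sq_nonneg _
  have hcone : B ≤ 3 * A := by nlinarith
  -- restricted eigenvalue
  set s2 : ℝ := ∑ j ∈ Sstar, u j ^ 2 with hs2def
  have hs2nn : 0 ≤ s2 := Finset.sum_nonneg fun j _ => sq_nonneg _
  have hre := hRE u (by rw [← hA, ← hB]; linarith)
  have hre2 : κstar^2 * (T:ℝ) * s2 ≤ ∑ t, v t ^ 2 := by
    have hl : 0 ≤ κstar * Real.sqrt (T:ℝ) * Real.sqrt s2 := by positivity
    have hsq := mul_self_le_mul_self hl hre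
    rw [Real.mul_self_sqrt (Finset.sum_nonneg fun t _ => sq_nonneg _)] at hsq
    calc κstar^2 * (T:ℝ) * s2
        = (κstar * Real.sqrt (T:ℝ) * Real.sqrt s2) * (κstar * Real.sqrt (T:ℝ) * Real.sqrt s2) := by
          rw [show (κstar * Real.sqrt (T:ℝ) * Real.sqrt s2) * (κstar * Real.sqrt (T:ℝ) * Real.sqrt s2)
            = κstar^2 * (Real.sqrt (T:ℝ) * Real.sqrt (T:ℝ)) * (Real.sqrt s2 * Real.sqrt s2) from by ring,
            Real.mul_self_sqrt (le_of_lt hT'), Real.mul_self_sqrt hs2nn]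
      _ ≤ ∑ t, v t ^ 2 := hsq
  have hhalf : (κstar^2 / 2) * s2 ≤ (3*lam/2) * A := by
    have h1 : (κstar^2/2) * s2 = (1/(2*(T:ℝ))) * (κstar^2 * (T:ℝ) * s2) := by
      field_simp
    rw [h1]
    calc (1/(2*(T:ℝ))) * (κstar^2 * (T:ℝ) * s2)
        ≤ (1/(2*(T:ℝ))) * (∑ t, v t ^ 2) := by
          apply mul_le_mul_of_nonneg_left hre2 (by positivity)
      _ ≤ (3*lam/2) * A - (lam/2) * B := hmain
      _ ≤ (3*lam/2) * A := by nlinarith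
  -- Cauchy–Schwarz : A² ≤ K * s2
  have hCS : A^2 ≤ (K:ℝ) * s2 := by
    have := sq_sum_le_card_mul_sum_sq (s := Sstar) (f := fun j => |u j|)
    rw [hcard] at this
    calc A^2 = (∑ j ∈ Sstar, |u j|)^2 := by rw [hA]
      _ ≤ (K:ℝ) * ∑ j ∈ Sstar, |u j| ^ 2 := by exact_mod_cast this
      _ = (K:ℝ) * s2 := by
          congr 1
          apply Finset.sum_congr rfl; intro j _; exact sq_abs _
  clear_value u v A B s2
  have hAbound : κstar^2 * A ≤ 3 * lam * (K:ℝ) := by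
    rcases eq_or_lt_of_le hAnn with h0 | hpos
    · rw [← h0, mul_zero]; positivity
    · have h1 : κstar^2 * s2 ≤ 3 * lam * A := by linarith [hhalf]
      have h2 : κstar^2 * A^2 ≤ κstar^2 * ((K:ℝ) * s2) :=
        mul_le_mul_of_nonneg_left hCS (by positivity)
      have h4 : (K:ℝ) * (κstar^2 * s2) ≤ (K:ℝ) * (3 * lam * A) :=
        mul_le_mul_of_nonneg_left h1 (Nat.cast_nonneg _)
      have h5 : (κstar^2 * A) * A ≤ (3 * lam * (K:ℝ)) * A := by nlinarith [h2, h4]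
      exact le_of_mul_le_mul_right h5 hpos
  have part2 : 2 * (∑ j, |θhat j - θstar j|) ≤ 48 * lam * K / κstar ^ 2 := by
    have hκ2 : (0:ℝ) < κstar^2 := by positivity
    rw [show (∑ j, |θhat j - θstar j|) = ∑ j, |u j| from by simp [hu], hAB,
      le_div_iff₀ hκ2]
    have hKnn : (0:ℝ) ≤ (K:ℝ) := Nat.cast_nonneg _
    nlinarith [hcone, hAbound, mul_le_mul_of_nonneg_left hcone hκ2.le,
      mul_nonneg hlam.le hKnn, hAnn, hκ2]
  exact ⟨part1, part2⟩
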